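/- Let m ≥ 2 and 1 ≤ k ≤ m. Let S be a uniformly random k-element subset of {1,…,m} and let P_S denote the m×m diagonal 0/1 matrix with (P_S)_{ii} = 1 if and only if i ∈ S. Then for every real m×m matrix A, E_S[P_S A P_S] = (k/m)·( ((k−1)/(m−1))·A + ((m−k)/(m−1))·diag(A) ), where diag(A) is the diagonal matrix whose diagonal agrees with that of A and whose off-diagonal entries are zero. -/

import Mathlib

open Matrix Finset

lemma card_filter_subset_powersetCard {α : Type*} [DecidableEq α] (t u : Finset α)
    (hu : u ⊆ t) {k : ℕ} (hk : u.card ≤ k) :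
    ((Finset.powersetCard k t).filter (fun S => u ⊆ S)).card
      = (t.card - u.card).choose (k - u.card) := by
  rw [← Finset.card_sdiff_of_subset hu, ← Finset.card_powersetCard]
  apply Finset.card_bij (fun S _ => S \ u)
  · intro S hS
    simp only [Finset.mem_filter, Finset.mem_powersetCard] at hS
    obtain ⟨⟨hSt, hScard⟩, huS⟩ := hS
    rw [Finset.mem_powersetCard]
    exact ⟨Finset.sdiff_subset_sdiff hSt Finset.Subset.rfl,
      by rw [Finset.card_sdiff_of_subset huS, hScard]⟩
  · intro S₁ h₁ S₂ h₂ h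
    simp only [Finset.mem_filter, Finset.mem_powersetCard] at h₁ h₂
    have e1 : S₁ = S₁ \ u ∪ u := (Finset.sdiff_union_of_subset h₁.2).symm
    have e2 : S₂ = S₂ \ u ∪ u := (Finset.sdiff_union_of_subset h₂.2).symm
    rw [e1, e2, h]
  · intro T hT
    rw [Finset.mem_powersetCard] at hT
    obtain ⟨hTt, hTcard⟩ := hT
    have hdisj : Disjoint T u := Finset.disjoint_of_subset_left hTt Finset.sdiff_disjoint
    refine ⟨T ∪ u, ?_, ?_⟩
    · simp only [Finset.mem_filter, Finset.mem_powersetCard]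
      refine ⟨⟨Finset.union_subset (hTt.trans Finset.sdiff_subset) hu, ?_⟩,
        Finset.subset_union_right⟩
      rw [Finset.card_union_of_disjoint hdisj, hTcard]
      omega
    · rw [Finset.union_sdiff_cancel_right hdisj]

/-- Expectation over a uniformly random `k`-element subset `S` of `{1,…,m}` of
`P_S A P_S`, where `P_S` is the diagonal 0/1 projection onto the coordinates in `S`. -/
theorem rand_k_projection_expectation (m k : ℕ) (hm : 2 ≤ m) (hk : 1 ≤ k) (hkm : k ≤ m)
    (A : Matrix (Fin m) (Fin m) ℝ) :
    ((m.choose k : ℝ))⁻¹ •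
        ∑ S ∈ Finset.powersetCard k (Finset.univ : Finset (Fin m)),
          (Matrix.diagonal (fun i => if i ∈ S then (1 : ℝ) else 0)) * A *
            (Matrix.diagonal (fun i => if i ∈ S then (1 : ℝ) else 0)) =
      ((k : ℝ) / m) •
        ((((k : ℝ) - 1) / ((m : ℝ) - 1)) • A +
          (((m : ℝ) - (k : ℝ)) / ((m : ℝ) - 1)) • Matrix.diagonal (fun i => A i i)) := by
  have hCpos : 0 < m.choose k := Nat.choose_pos hkm
  have hC : (m.choose k : ℝ) ≠ 0 := by positivity
  have hm0 : (m : ℝ) ≠ 0 := by positivity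
  have hm1 : (m : ℝ) - 1 ≠ 0 := by
    have : (2:ℝ) ≤ m := by exact_mod_cast hm
    linarith
  -- key Nat identity 1 : m * C(m-1, k-1) = k * C(m, k)
  have h1 : m * (m-1).choose (k-1) = k * m.choose k := by
    have := Nat.add_one_mul_choose_eq (m-1) (k-1)
    have em : m - 1 + 1 = m := by omega
    have ek : k - 1 + 1 = k := by omega
    rw [em, ek] at this
    rw [this, mul_comm]
  have h1R : (m : ℝ) * ((m-1).choose (k-1) : ℝ) = (k : ℝ) * (m.choose k : ℝ) := by
    exact_mod_cast congrArg (Nat.cast (R := ℝ)) h1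
  have hcast1 : ((m-1).choose (k-1) : ℝ) = (k : ℝ) / m * (m.choose k : ℝ) := by
    field_simp
    linear_combination h1R
  ext i j
  simp only [Matrix.smul_apply, Matrix.sum_apply, Matrix.add_apply]
  have key : ∀ S : Finset (Fin m),
      ((Matrix.diagonal (fun i => if i ∈ S then (1:ℝ) else 0)) * A *
        (Matrix.diagonal (fun i => if i ∈ S then (1:ℝ) else 0))) i j
      = (if i ∈ S ∧ j ∈ S then A i j else 0) := by
    intro S
    rw [Matrix.mul_diagonal, Matrix.diagonal_mul]
    by_cases h1' : i ∈ S <;> by_cases h2' : j ∈ S <;> simp [h1', h2']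
  simp only [key]
  rw [← Finset.sum_filter, Finset.sum_const, nsmul_eq_mul]
  by_cases hij : i = j
  · subst hij
    have hfeq : (Finset.powersetCard k (Finset.univ : Finset (Fin m))).filter
        (fun S => i ∈ S ∧ i ∈ S)
        = (Finset.powersetCard k (Finset.univ : Finset (Fin m))).filter
          (fun S => ({i} : Finset (Fin m)) ⊆ S) := by
      apply Finset.filter_congr
      intro S _
      simp
    rw [hfeq, card_filter_subset_powersetCard _ _ (Finset.subset_univ _)
      (by simpa using hk)]
    simp only [Finset.card_singleton, Finset.card_univ, Fintype.card_fin,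
      Matrix.diagonal_apply_eq]
    rw [hcast1]
    simp only [smul_eq_mul]
    field_simp
    ring
  · have hdiag : Matrix.diagonal (fun i => A i i) i j = 0 :=
      Matrix.diagonal_apply_ne _ hij
    rw [hdiag]
    by_cases hk2 : 2 ≤ k
    · -- identity 2 : (m-1) * C(m-2, k-2) = (k-1) * C(m-1, k-1)
      have h2 : (m-1) * (m-2).choose (k-2) = (k-1) * (m-1).choose (k-1) := by
        have := Nat.add_one_mul_choose_eq (m-2) (k-2)
        have em : m - 2 + 1 = m - 1 := by omega
        have ek : k - 2 + 1 = k - 1 := by omega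
        rw [em, ek] at this
        rw [this, mul_comm]
      have h2R : ((m:ℝ) - 1) * ((m-2).choose (k-2) : ℝ)
          = ((k:ℝ) - 1) * ((m-1).choose (k-1) : ℝ) := by
        have h := congrArg (Nat.cast (R := ℝ)) h2
        push_cast [Nat.cast_sub (show 1 ≤ m by omega),
          Nat.cast_sub (show 1 ≤ k by omega)] at h
        exact h
      have hcast2 : ((m-2).choose (k-2) : ℝ)
          = ((k:ℝ) - 1) / ((m:ℝ) - 1) * ((m-1).choose (k-1) : ℝ) := by
        field_simp
        linear_combination h2R
      have hfeq : (Finset.powersetCard k (Finset.univ : Finset (Fin m))).filter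
          (fun S => i ∈ S ∧ j ∈ S)
          = (Finset.powersetCard k (Finset.univ : Finset (Fin m))).filter
            (fun S => ({i, j} : Finset (Fin m)) ⊆ S) := by
        apply Finset.filter_congr
        intro S _
        simp [Finset.insert_subset_iff]
      have hcard2 : ({i, j} : Finset (Fin m)).card = 2 := by
        rw [Finset.card_insert_of_notMem (by simpa using hij), Finset.card_singleton]
      rw [hfeq, card_filter_subset_powersetCard _ _ (Finset.subset_univ _)
        (by rw [hcard2]; omega)]
      rw [hcard2, Finset.card_univ, Fintype.card_fin]
      rw [hcast2, hcast1]
      simp only [smul_eq_mul]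
      field_simp
      ring
    · -- k = 1 : no k-subset contains both i and j
      have hk1 : k = 1 := by omega
      have hempty : (Finset.powersetCard k (Finset.univ : Finset (Fin m))).filter
          (fun S => i ∈ S ∧ j ∈ S) = ∅ := by
        rw [Finset.filter_eq_empty_iff]
        intro S hS
        rw [Finset.mem_powersetCard] at hS
        rintro ⟨hiS, hjS⟩
        have hsub : ({i, j} : Finset (Fin m)) ⊆ S := by
          simp [Finset.insert_subset_iff, hiS, hjS]
        have := Finset.card_le_card hsub
        rw [Finset.card_insert_of_notMem (by simpa using hij),
          Finset.card_singleton, hS.2, hk1] at this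
        omega
      rw [hempty]
      simp [hk1]
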